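/- Let (n_k) be a sequence of positive integers with 2^{k-1} ≤ n_k < 2^k for each k ≥ 1. Let l ≥ 0 and m ≥ l+1 be integers, let p_k be a real linear combination of Walsh functions w_0,...,w_{2^l - 1} for k = l+1,...,m, and set f(x) = Σ_{k=l+1}^m p_k(x) w_{n_k}(x). Then ‖f‖_∞ ≥ Σ_{k=l+1}^m ‖p_k‖_1, where norms are taken over [0,1]. -/

import Mathlib

open Real MeasureTheory

/-- L¹ norm of `f` on `(0,1)`. -/
noncomputable def l1Norm01 (f : ℝ → ℝ) : ℝ := ∫ x in (0:ℝ)..1, |f x|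

/-- Essential supremum of `|f|` on `[0,1]`. -/
noncomputable def essSupNorm01 (f : ℝ → ℝ) : ℝ :=
  essSup (fun x => |f x|) (volume.restrict (Set.Icc (0:ℝ) 1))

/-- The `n`-th Rademacher function. -/
noncomputable def rademacher (n : ℕ) (x : ℝ) : ℝ := Real.sign (Real.sin (2^n * π * x))

/-- The `n`-th Walsh function. -/
noncomputable def walsh (n : ℕ) (x : ℝ) : ℝ :=
  ∏ k ∈ Finset.range (n+1), if Nat.testBit n k then rademacher (k+1) x else 1

/-! ### Auxiliary material -/

section Aux

lemma rademacher_eq (j i : ℕ) (x : ℝ) (h1 : (i:ℝ)/2^j < x) (h2 : x < ((i:ℝ)+1)/2^j) :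
    rademacher j x = (-1:ℝ)^i := by
  have h2j : (0:ℝ) < 2^j := by positivity
  have ht1 : (i:ℝ) < 2^j * x := by rw [div_lt_iff₀ h2j] at h1; linarith [h1]
  have ht2 : 2^j * x < (i:ℝ) + 1 := by rw [lt_div_iff₀ h2j] at h2; linarith [h2]
  set t : ℝ := 2^j * x - i with htdef
  have harg : 2^j * π * x = π * t + (i:ℤ) * π := by push_cast; ring
  have hsin : Real.sin (2^j * π * x) = (-1:ℝ)^i * Real.sin (π * t) := by
    rw [harg, Real.sin_add_int_mul_pi]
    norm_num
  have hpos : 0 < Real.sin (π * t) := by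
    apply Real.sin_pos_of_pos_of_lt_pi
    · have : 0 < t := by simp [htdef]; linarith
      positivity
    · have : t < 1 := by simp [htdef]; linarith
      nlinarith [Real.pi_pos]
  unfold rademacher
  rw [hsin]
  rcases Nat.even_or_odd i with he | ho
  · rw [he.neg_one_pow]; simpa using Real.sign_of_pos (by simpa using hpos)
  · rw [ho.neg_one_pow]; simp only [neg_one_mul]
    rw [Real.sign_of_neg (by linarith)]

/-- Discrete Walsh values. -/
noncomputable def Wd (m n i : ℕ) : ℝ :=
  ∏ k ∈ Finset.range m, if n.testBit k && i.testBit (m-1-k) then (-1:ℝ) else 1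

lemma Wd_zero (m i : ℕ) : Wd m 0 i = 1 := by simp [Wd]

lemma Wd_abs (m n i : ℕ) : |Wd m n i| = 1 := by
  unfold Wd
  rw [Finset.abs_prod]
  apply Finset.prod_eq_one
  intro k _
  split <;> simp

lemma Wd_mul (m a b i : ℕ) : Wd m a i * Wd m b i = Wd m (a ^^^ b) i := by
  unfold Wd
  rw [← Finset.prod_mul_distrib]
  apply Finset.prod_congr rfl
  intro k _
  rw [Nat.testBit_xor]
  cases a.testBit k <;> cases b.testBit k <;> cases i.testBit (m-1-k) <;> norm_num

lemma Wd_sq (m n i : ℕ) : Wd m n i * Wd m n i = 1 := by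
  rw [Wd_mul, Nat.xor_self, Wd_zero]

lemma Wd_flip (m n t i : ℕ) (ht : t < m) (hb : n.testBit t = true) :
    Wd m n (i ^^^ 2^(m-1-t)) = - Wd m n i := by
  unfold Wd
  rw [← Finset.mul_prod_erase _ _ (Finset.mem_range.mpr ht),
      ← Finset.mul_prod_erase _ (fun k => if n.testBit k && i.testBit (m-1-k) then (-1:ℝ) else 1)
        (Finset.mem_range.mpr ht)]
  have hfac : ∀ k, k ∈ (Finset.range m).erase t →
      (if n.testBit k && (i ^^^ 2^(m-1-t)).testBit (m-1-k) then (-1:ℝ) else 1) =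
      (if n.testBit k && i.testBit (m-1-k) then (-1:ℝ) else 1) := by
    intro k hk
    rw [Finset.mem_erase, Finset.mem_range] at hk
    have hne : m - 1 - t ≠ m - 1 - k := by omega
    rw [Nat.testBit_xor, Nat.testBit_two_pow, decide_eq_false hne]
    simp
  rw [Finset.prod_congr rfl hfac]
  have : (i ^^^ 2^(m-1-t)).testBit (m-1-t) = !(i.testBit (m-1-t)) := by
    rw [Nat.testBit_xor, Nat.testBit_two_pow, decide_eq_true rfl]
    cases i.testBit (m-1-t) <;> simp
  rw [this, hb]
  cases i.testBit (m-1-t) <;> simp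

lemma xor_flip_lt (m s i : ℕ) (hs : s < m) (hi : i < 2^m) : i ^^^ 2^s < 2^m :=
  Nat.xor_lt_two_pow hi (Nat.pow_lt_pow_right (by norm_num) hs)

lemma sum_Wd_zero (m n t : ℕ) (c : ℕ → ℝ) (ht : t < m) (hb : n.testBit t = true)
    (hc : ∀ i, c (i ^^^ 2^(m-1-t)) = c i) :
    ∑ i ∈ Finset.range (2^m), c i * Wd m n i = 0 := by
  have hsm : m - 1 - t < m := by omega
  apply Finset.sum_involution (fun i _ => i ^^^ 2^(m-1-t))
  · intro i hi
    rw [hc, Wd_flip m n t i ht hb]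
    ring
  · intro i hi hne
    intro h
    have h2 : i ^^^ (i ^^^ 2^(m-1-t)) = i ^^^ i := congrArg (i ^^^ ·) h
    rw [Nat.xor_xor_cancel_left, Nat.xor_self] at h2
    have : (0:ℕ) < 2^(m-1-t) := by positivity
    omega
  · intro i hi
    rw [Nat.xor_xor_cancel_right]
  · intro i hi
    exact Finset.mem_range.mpr (xor_flip_lt m _ i hsm (Finset.mem_range.mp hi))

lemma neg_one_pow_div (i s : ℕ) : ((-1:ℝ))^(i / 2^s) = if i.testBit s then -1 else 1 := by
  rw [Nat.testBit_eq_decide_div_mod_eq]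
  rcases Nat.even_or_odd (i / 2^s) with he | ho
  · rw [he.neg_one_pow]
    have : i / 2^s % 2 = 0 := Nat.even_iff.mp he
    simp [this]
  · rw [ho.neg_one_pow]
    have : i / 2^s % 2 = 1 := Nat.odd_iff.mp ho
    simp [this]

lemma div_interval (L m i : ℕ) (hLm : L ≤ m) (x : ℝ)
    (h1 : (i:ℝ)/2^m < x) (h2 : x < ((i:ℝ)+1)/2^m) :
    ((i / 2^(m-L) : ℕ):ℝ)/2^L < x ∧ x < (((i / 2^(m-L) : ℕ):ℝ)+1)/2^L := by
  set d : ℕ := 2^(m-L) with hd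
  set i' : ℕ := i / d with hi'
  have hd0 : 0 < d := Nat.pow_pos (by norm_num)
  have hnat1 : i' * d ≤ i := Nat.div_mul_le_self i d
  have hnat2 : i < (i' + 1) * d := (Nat.div_lt_iff_lt_mul hd0).mp (Nat.lt_succ_self i')
  have h2m : (0:ℝ) < 2^m := by positivity
  have h2k : (0:ℝ) < 2^L := by positivity
  have hdR : ((d:ℝ)) = 2^(m-L) := by rw [hd]; push_cast; ring
  have hpow : (2:ℝ)^L * (d:ℝ) = 2^m := by
    rw [hdR, ← pow_add]; congr 1; omega
  have hc1 : (i':ℝ) * d ≤ i := by exact_mod_cast hnat1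
  have hc2 : (i:ℝ) + 1 ≤ ((i':ℝ) + 1) * d := by exact_mod_cast hnat2
  have hdpos : (0:ℝ) < d := by positivity
  constructor
  · calc ((i':ℝ))/2^L ≤ (i:ℝ)/2^m := by
          rw [div_le_div_iff₀ h2k h2m]
          nlinarith
      _ < x := h1
  · calc x < ((i:ℝ)+1)/2^m := h2
      _ ≤ ((i':ℝ)+1)/2^L := by
          rw [div_le_div_iff₀ h2m h2k]
          nlinarith

lemma walsh_prod_range (n : ℕ) (x : ℝ) (m : ℕ) (hn : n < 2^m) :
    walsh n x = ∏ k ∈ Finset.range m, if Nat.testBit n k then rademacher (k+1) x else 1 := by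
  unfold walsh
  set A : ℕ → ℝ := fun k => if Nat.testBit n k then rademacher (k+1) x else 1 with hA
  have key : ∀ L L' : ℕ, L ≤ L' → (∀ k, L ≤ k → n.testBit k = false) →
      ∏ k ∈ Finset.range L', A k = ∏ k ∈ Finset.range L, A k := by
    intro L L' hLL hbit
    symm
    apply Finset.prod_subset (Finset.range_subset_range.mpr hLL)
    intro k _ hk
    simp only [Finset.mem_range, not_lt] at hk
    simp [hA, hbit k hk]
  have h1 : ∀ k, n+1 ≤ k → n.testBit k = false := by
    intro k hk
    exact Nat.testBit_lt_two_pow (lt_of_lt_of_le ((Nat.lt_two_pow_self (n := n)))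
      (Nat.pow_le_pow_right (by norm_num) (by omega)))
  have h2 : ∀ k, m ≤ k → n.testBit k = false := by
    intro k hk
    exact Nat.testBit_lt_two_pow (lt_of_lt_of_le hn (Nat.pow_le_pow_right (by norm_num) hk))
  calc ∏ k ∈ Finset.range (n+1), A k
      = ∏ k ∈ Finset.range (max (n+1) m), A k := (key _ _ (le_max_left _ _) h1).symm
    _ = ∏ k ∈ Finset.range m, A k := key _ _ (le_max_right _ _) h2

lemma walsh_eq (m n i : ℕ) (hn : n < 2^m) (x : ℝ)
    (h1 : (i:ℝ)/2^m < x) (h2 : x < ((i:ℝ)+1)/2^m) : walsh n x = Wd m n i := by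
  rw [walsh_prod_range n x m hn]
  unfold Wd
  apply Finset.prod_congr rfl
  intro k hk
  simp only [Finset.mem_range] at hk
  by_cases hb : n.testBit k
  · simp only [hb, Bool.true_and, if_true]
    have hkm : k + 1 ≤ m := hk
    obtain ⟨g1, g2⟩ := div_interval (k+1) m i hkm x h1 h2
    have hr : rademacher (k+1) x = (-1:ℝ)^(i / 2^(m-(k+1))) := rademacher_eq (k+1) _ x g1 g2
    have hmk : m - (k+1) = m - 1 - k := by omega
    rw [hr, hmk, neg_one_pow_div]
  · simp [hb]

instance : Std.Commutative (α := ℕ) (· ^^^ ·) := ⟨Nat.xor_comm⟩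
instance : Std.Associative (α := ℕ) (· ^^^ ·) := ⟨Nat.xor_assoc⟩

def xorFold (n : ℕ → ℕ) (T : Finset ℕ) : ℕ := T.fold (· ^^^ ·) 0 n

lemma xorFold_insert (n : ℕ → ℕ) (a : ℕ) (T : Finset ℕ) (h : a ∉ T) :
    xorFold n (insert a T) = n a ^^^ xorFold n T := by
  unfold xorFold; exact Finset.fold_insert h

lemma xorFold_empty (n : ℕ → ℕ) : xorFold n ∅ = 0 := by unfold xorFold; simp

lemma prod_Wd (m : ℕ) (i : ℕ) (n : ℕ → ℕ) (T : Finset ℕ) :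
    ∏ j ∈ T, Wd m (n j) i = Wd m (xorFold n T) i := by
  induction T using Finset.induction_on with
  | empty => simp [xorFold_empty, Wd_zero]
  | insert a s h ih =>
                   rw [Finset.prod_insert h, xorFold_insert n a s h, ih, Wd_mul]

lemma fold_lt (n : ℕ → ℕ) (c : ℕ) (T : Finset ℕ) (h : ∀ j ∈ T, n j < 2^c) :
    xorFold n T < 2^c := by
  induction T using Finset.induction_on with
  | empty => rw [xorFold_empty]; positivity
  | insert a s hmem ih =>
      rw [xorFold_insert n a s hmem]
      exact Nat.xor_lt_two_pow (h a (Finset.mem_insert_self a s))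
        (ih (fun j hj => h j (Finset.mem_insert_of_mem hj)))

lemma topbit (n : ℕ → ℕ) (hn : ∀ k, 1 ≤ k → 2^(k-1) ≤ n k ∧ n k < 2^k)
    (l m : ℕ) (T : Finset ℕ) (hT : T.Nonempty) (hTsub : T ⊆ Finset.Icc (l+1) m) :
    (xorFold n T).testBit (T.max' hT - 1) = true := by
  set K : ℕ := T.max' hT with hK
  have hKmem : K ∈ T := T.max'_mem hT
  have hK1 : l + 1 ≤ K := (Finset.mem_Icc.mp (hTsub hKmem)).1
  have hfold : xorFold n T = n K ^^^ xorFold n (T.erase K) := by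
    conv_lhs => rw [← Finset.insert_erase hKmem]
    rw [xorFold_insert n K (T.erase K) (Finset.notMem_erase K T)]
  have hrest : xorFold n (T.erase K) < 2^(K-1) := by
    apply fold_lt
    intro j hj
    rw [Finset.mem_erase] at hj
    have hjK : j ≤ K := Finset.le_max' T j hj.2
    have hj1 : l + 1 ≤ j := (Finset.mem_Icc.mp (hTsub hj.2)).1
    calc n j < 2^j := (hn j (by omega)).2
      _ ≤ 2^(K-1) := Nat.pow_le_pow_right (by norm_num) (by omega)
  have hbit1 : (n K).testBit (K-1) = true := by
    rw [Nat.testBit_eq_decide_div_mod_eq]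
    have h1 : 2^(K-1) ≤ n K := (hn K (by omega)).1
    have h2 : n K < 2^K := (hn K (by omega)).2
    have hdiv : n K / 2^(K-1) = 1 := by
      apply Nat.div_eq_of_lt_le
      · simpa using h1
      · have : 2 * 2^(K-1) = 2^K := by rw [← pow_succ']; congr 1; omega
        omega
    simp [hdiv]
  have hbit2 : (xorFold n (T.erase K)).testBit (K-1) = false :=
    Nat.testBit_lt_two_pow hrest
  rw [hfold, Nat.testBit_xor, hbit1, hbit2]
  rfl

lemma ortho (n : ℕ → ℕ) (hn : ∀ k, 1 ≤ k → 2^(k-1) ≤ n k ∧ n k < 2^k)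
    (l m : ℕ) (T : Finset ℕ) (hT : T.Nonempty) (hTsub : T ⊆ Finset.Icc (l+1) m)
    (c : ℕ → ℝ) (hc : ∀ s, s < m - l → ∀ i, c (i ^^^ 2^s) = c i) :
    ∑ i ∈ Finset.range (2^m), c i * Wd m (xorFold n T) i = 0 := by
  have hmem := T.max'_mem hT
  have h1 := Finset.mem_Icc.mp (hTsub hmem)
  have ht : T.max' hT - 1 < m := by omega
  apply sum_Wd_zero m _ (T.max' hT - 1) c ht (topbit n hn l m T hT hTsub)
  apply hc
  omega

lemma xor_small_div (i s d : ℕ) (h : s < d) : (i ^^^ 2^s) / 2^d = i / 2^d := by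
  have e : ∀ j : ℕ, j / 2^d = j >>> d := fun j => (Nat.shiftRight_eq_div_pow j d).symm
  rw [e, e]
  apply Nat.eq_of_testBit_eq
  intro k
  rw [Nat.testBit_shiftRight, Nat.testBit_shiftRight, Nat.testBit_xor,
      Nat.testBit_two_pow, decide_eq_false (by omega : s ≠ d + k)]
  simp

lemma sign_mul_self' (x : ℝ) : Real.sign x * x = |x| := by
  rcases lt_trichotomy x 0 with h|h|h
  · rw [Real.sign_of_neg h, abs_of_neg h]; ring
  · simp [h]
  · rw [Real.sign_of_pos h, abs_of_pos h]; ring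

lemma abs_sign_le (x : ℝ) : |Real.sign x| ≤ 1 := by
  rcases lt_trichotomy x 0 with h|h|h
  · rw [Real.sign_of_neg h]; norm_num
  · simp [h, Real.sign_zero]
  · rw [Real.sign_of_pos h]; norm_num

lemma step_ae (a b c : ℝ) (h : ℝ → ℝ) (hc : ∀ x ∈ Set.Ioo a b, h x = c) :
    h =ᵐ[volume.restrict (Set.Ioc a b)] (fun _ => c) := by
  have h1 : volume.restrict (Set.Ioc a b) {x | h x ≠ c} = 0 := by
    rw [Measure.restrict_apply' measurableSet_Ioc]
    have hsub : {x | h x ≠ c} ∩ Set.Ioc a b ⊆ {b} := by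
      intro x ⟨hx1, hx2⟩
      by_contra hxb
      exact hx1 (hc x ⟨hx2.1, lt_of_le_of_ne hx2.2 hxb⟩)
    exact measure_mono_null hsub (measure_singleton b)
  exact (ae_iff).mpr (by simpa using h1)

lemma step_integrable (a b c : ℝ) (h : ℝ → ℝ) (hab : a < b) (hc : ∀ x ∈ Set.Ioo a b, h x = c) :
    IntervalIntegrable h volume a b := by
  rw [intervalIntegrable_iff_integrableOn_Ioc_of_le (le_of_lt hab)]
  exact (integrableOn_const (by simp)).congr_fun_ae (step_ae a b c h hc).symm

lemma step_integral (a b c : ℝ) (h : ℝ → ℝ) (hab : a < b) (hc : ∀ x ∈ Set.Ioo a b, h x = c) :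
    ∫ x in a..b, h x = c * (b - a) := by
  have hae : ∀ᵐ x ∂(volume : Measure ℝ), x ∈ Set.Ioc a b → h x = c := by
    have hb : ∀ᵐ x ∂(volume : Measure ℝ), x ≠ b := by
      rw [ae_iff]; simpa using measure_singleton (b : ℝ)
    filter_upwards [hb] with x hx hmem
    exact hc x ⟨hmem.1, lt_of_le_of_ne hmem.2 hx⟩
  rw [intervalIntegral.integral_of_le (le_of_lt hab),
      setIntegral_congr_ae measurableSet_Ioc hae]
  rw [setIntegral_const]
  simp [Real.volume_Ioc, ENNReal.toReal_ofReal (by linarith : (0:ℝ) ≤ b - a)]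
  rw [max_eq_left (by linarith)]; ring

lemma ae_exists_Ioo (m : ℕ) :
    ∀ᵐ x ∂(volume.restrict (Set.Icc (0:ℝ) 1)),
      ∃ i : ℕ, i < 2^m ∧ ((i:ℝ)/2^m < x ∧ x < ((i:ℝ)+1)/2^m) := by
  set D : Set ℝ := (fun k : ℕ => (k:ℝ)/2^m) '' (Set.Iic (2^m)) with hD
  have hDfin : D.Finite := (Set.finite_Iic _).image _
  have hDnull : volume D = 0 := hDfin.measure_zero _
  rw [ae_iff]
  rw [Measure.restrict_apply' measurableSet_Icc]
  apply measure_mono_null _ hDnull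
  rintro x ⟨hx1, hx2⟩
  simp only [Set.mem_setOf_eq] at hx1
  have h2m : (0:ℝ) < 2^m := by positivity
  rcases eq_or_lt_of_le hx2.2 with heq | hlt
  · exact ⟨2^m, Set.mem_Iic.mpr le_rfl, by rw [heq]; push_cast; field_simp⟩
  · set i : ℕ := ⌊2^m * x⌋₊ with hi
    have hge : (0:ℝ) ≤ 2^m * x := by nlinarith [hx2.1]
    have hle : (i:ℝ) ≤ 2^m * x := Nat.floor_le hge
    have hlt2 : 2^m * x < (i:ℝ) + 1 := Nat.lt_floor_add_one _
    have him : i < 2^m := by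
      have h1 : 2^m * x < 2^m := by nlinarith
      have h2 : (i:ℝ) < 2^m := lt_of_le_of_lt hle h1
      exact_mod_cast h2
    have hxlt : x < ((i:ℝ)+1)/2^m := by rw [lt_div_iff₀ h2m]; linarith
    have hxge : (i:ℝ)/2^m ≤ x := by rw [div_le_iff₀ h2m]; linarith
    rcases eq_or_lt_of_le hxge with heq2 | hlt2'
    · exact ⟨i, Set.mem_Iic.mpr (le_of_lt him), heq2⟩
    · exact absurd ⟨i, him, hlt2', hxlt⟩ hx1

lemma le_essSup_of_Ioo (h : ℝ → ℝ) (M a b c : ℝ) (hab : a < b)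
    (hsub : Set.Ioo a b ⊆ Set.Icc 0 1) (hc : ∀ x ∈ Set.Ioo a b, h x = c)
    (hbd : ∀ᵐ x ∂(volume.restrict (Set.Icc (0:ℝ) 1)), |h x| ≤ M) :
    |c| ≤ essSup (fun x => |h x|) (volume.restrict (Set.Icc (0:ℝ) 1)) := by
  set μ := volume.restrict (Set.Icc (0:ℝ) 1) with hμ
  have hfreq : ∃ᶠ x in ae μ, |c| ≤ |h x| := by
    rw [MeasureTheory.frequently_ae_iff]
    intro hnull
    have hsub2 : Set.Ioo a b ⊆ {x | |c| ≤ |h x|} := fun x hx => by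
      simp only [Set.mem_setOf_eq]; rw [hc x hx]
    have h0 : μ (Set.Ioo a b) = 0 := measure_mono_null hsub2 hnull
    rw [hμ, Measure.restrict_apply' measurableSet_Icc,
        Set.inter_eq_self_of_subset_left hsub, Real.volume_Ioo] at h0
    simp [ENNReal.ofReal_eq_zero] at h0
    linarith
  exact Filter.le_limsup_of_frequently_le hfreq ⟨M, by simpa [Filter.eventually_map] using hbd⟩

end Aux

/-- Sidon-type inequality for the Walsh system. -/
theorem walsh_sidon (n : ℕ → ℕ) (hn : ∀ k, 1 ≤ k → 2^(k-1) ≤ n k ∧ n k < 2^k)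
    (l m : ℕ) (hm : l + 1 ≤ m) (p : ℕ → ℝ → ℝ)
    (hp : ∀ k, l+1 ≤ k → k ≤ m →
      ∃ a : ℕ → ℝ, p k = fun x => ∑ j ∈ Finset.range (2^l), a j * walsh j x) :
    ∑ k ∈ Finset.Icc (l+1) m, l1Norm01 (p k) ≤
      essSupNorm01 (fun x => ∑ k ∈ Finset.Icc (l+1) m, p k x * walsh (n k) x) := by
  classical
  have hpc : ∀ k ∈ Finset.Icc (l+1) m, ∃ a : ℕ → ℝ,
      p k = fun x => ∑ j ∈ Finset.range (2^l), a j * walsh j x := by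
    intro k hk
    rw [Finset.mem_Icc] at hk
    exact hp k hk.1 hk.2
  choose! a ha using hpc
  set K := Finset.Icc (l+1) m with hK
  set N := 2^m with hN
  set q : ℕ → ℕ := fun i => i / 2^(m-l) with hq
  set P : ℕ → ℕ → ℝ := fun k i => ∑ j ∈ Finset.range (2^l), a k j * Wd l j (q i) with hP
  set ε : ℕ → ℕ → ℝ := fun k i => Real.sign (P k i) with hε
  set F : ℕ → ℝ := fun i => ∑ k ∈ K, P k i * Wd m (n k) i with hF
  set G : ℕ → ℝ := fun i => ∏ k ∈ K, (1 + ε k i * Wd m (n k) i) with hG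
  have h2m : (0:ℝ) < 2^m := by positivity
  have hnk : ∀ k ∈ K, n k < 2^m := by
    intro k hk
    rw [hK, Finset.mem_Icc] at hk
    calc n k < 2^k := (hn k (by omega)).2
      _ ≤ 2^m := Nat.pow_le_pow_right (by norm_num) hk.2
  -- p is a step function at generation m
  have hpstep : ∀ k ∈ K, ∀ i : ℕ, ∀ x : ℝ,
      (i:ℝ)/2^m < x → x < ((i:ℝ)+1)/2^m → p k x = P k i := by
    intro k hk i x h1 h2
    rw [ha k hk]
    simp only [hP]
    apply Finset.sum_congr rfl
    intro j hj
    rw [Finset.mem_range] at hj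
    obtain ⟨g1, g2⟩ := div_interval l m i (by omega) x h1 h2
    rw [walsh_eq l j (q i) hj x g1 g2]
  -- f is a step function at generation m
  have hfstep : ∀ i : ℕ, ∀ x : ℝ,
      (i:ℝ)/2^m < x → x < ((i:ℝ)+1)/2^m →
      (∑ k ∈ K, p k x * walsh (n k) x) = F i := by
    intro i x h1 h2
    simp only [hF]
    apply Finset.sum_congr rfl
    intro k hk
    rw [hpstep k hk i x h1 h2, walsh_eq m (n k) i (hnk k hk) x h1 h2]
  -- invariance under low-bit flips
  have hqflip : ∀ s, s < m - l → ∀ i, q (i ^^^ 2^s) = q i := by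
    intro s hs i
    simp only [hq]
    exact xor_small_div i s (m-l) hs
  have hPflip : ∀ k, ∀ s, s < m - l → ∀ i, P k (i ^^^ 2^s) = P k i := by
    intro k s hs i
    simp only [hP]
    rw [hqflip s hs i]
  have hεflip : ∀ k, ∀ s, s < m - l → ∀ i, ε k (i ^^^ 2^s) = ε k i := by
    intro k s hs i
    simp only [hε]
    rw [hPflip k s hs i]
  -- L¹ norms
  have hl1 : ∀ k ∈ K, l1Norm01 (p k) = (∑ i ∈ Finset.range N, |P k i|) * ((2:ℝ)^m)⁻¹ := by
    intro k hk
    set aF : ℕ → ℝ := fun i => (i:ℝ)/2^m with haF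
    have haF1 : ∀ i : ℕ, aF (i+1) = ((i:ℝ)+1)/2^m := by
      intro i; simp only [haF]; push_cast; ring
    have hstep : ∀ i : ℕ, ∀ x ∈ Set.Ioo (aF i) (aF (i+1)), |p k x| = |P k i| := by
      intro i x hx
      rw [haF1 i] at hx
      rw [hpstep k hk i x hx.1 hx.2]
    have hlt : ∀ i : ℕ, aF i < aF (i+1) := by
      intro i
      rw [haF1 i]
      simp only [haF]
      rw [div_lt_div_iff₀ h2m h2m]
      nlinarith
    have hint : ∀ i, i < N → IntervalIntegrable (fun x => |p k x|) volume (aF i) (aF (i+1)) :=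
      fun i _ => step_integrable _ _ (|P k i|) _ (hlt i) (hstep i)
    have hadd := intervalIntegral.sum_integral_adjacent_intervals
      (f := fun x => |p k x|) (μ := volume) hint
    have h0 : aF 0 = 0 := by simp [haF]
    have h1 : aF N = 1 := by
      simp only [haF, hN]
      push_cast
      field_simp
    unfold l1Norm01
    rw [← h0, ← h1, ← hadd, Finset.sum_mul]
    apply Finset.sum_congr rfl
    intro i _
    rw [step_integral _ _ (|P k i|) _ (hlt i) (hstep i), haF1 i]
    simp only [haF]
    congr 1
    field_simp
    ring
  -- Riesz product is nonnegative
  have hG0 : ∀ i, 0 ≤ G i := by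
    intro i
    simp only [hG]
    apply Finset.prod_nonneg
    intro k _
    have h1 : |ε k i * Wd m (n k) i| ≤ 1 := by
      rw [abs_mul, Wd_abs, mul_one]
      exact abs_sign_le _
    have := neg_abs_le (ε k i * Wd m (n k) i)
    linarith [abs_le.mp h1]
  -- expansion of the Riesz product
  have hGexp : ∀ i, G i = ∑ S ∈ K.powerset, ∏ j ∈ S, (ε j i * Wd m (n j) i) := by
    intro i
    simp only [hG]
    calc ∏ k ∈ K, (1 + ε k i * Wd m (n k) i)
        = ∏ k ∈ K, (ε k i * Wd m (n k) i + 1) := by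
          apply Finset.prod_congr rfl; intro k _; ring
      _ = ∑ S ∈ K.powerset, (∏ j ∈ S, (ε j i * Wd m (n j) i)) * ∏ j ∈ K \ S, 1 :=
          Finset.prod_add _ _ _
      _ = ∑ S ∈ K.powerset, ∏ j ∈ S, (ε j i * Wd m (n j) i) := by
          apply Finset.sum_congr rfl; intro S _; rw [Finset.prod_const_one, mul_one]
  -- total mass of the Riesz product
  have hGsum : ∑ i ∈ Finset.range N, G i = (2:ℝ)^m := by
    have hswap : ∑ i ∈ Finset.range N, G i
        = ∑ S ∈ K.powerset, ∑ i ∈ Finset.range N, ∏ j ∈ S, (ε j i * Wd m (n j) i) := by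
      rw [← Finset.sum_comm]
      exact Finset.sum_congr rfl (fun i _ => hGexp i)
    rw [hswap]
    rw [Finset.sum_eq_single_of_mem ∅ (Finset.empty_mem_powerset K)]
    · simp [hN]
    · intro S hS hSne
      have hSsub : S ⊆ K := Finset.mem_powerset.mp hS
      have hterm : ∀ i, ∏ j ∈ S, (ε j i * Wd m (n j) i)
          = (∏ j ∈ S, ε j i) * Wd m (xorFold n S) i := by
        intro i
        rw [Finset.prod_mul_distrib, prod_Wd]
      rw [Finset.sum_congr rfl (fun i _ => hterm i)]
      rw [hN]
      apply ortho n hn l m S (Finset.nonempty_of_ne_empty hSne) (hK ▸ hSsub)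
      intro s hs i
      apply Finset.prod_congr rfl
      intro j _
      exact hεflip j s hs i
  -- the key identity
  have hGF : ∑ i ∈ Finset.range N, G i * F i
      = ∑ k ∈ K, ∑ i ∈ Finset.range N, |P k i| := by
    have hexp : ∀ i, G i * F i = ∑ S ∈ K.powerset, ∑ k' ∈ K,
        (∏ j ∈ S, (ε j i * Wd m (n j) i)) * (P k' i * Wd m (n k') i) := by
      intro i
      rw [hGexp i, Finset.sum_mul]
      apply Finset.sum_congr rfl
      intro S _
      simp only [hF]
      rw [Finset.mul_sum]
    have hswap : ∑ i ∈ Finset.range N, G i * F i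
        = ∑ S ∈ K.powerset, ∑ k' ∈ K, ∑ i ∈ Finset.range N,
            (∏ j ∈ S, (ε j i * Wd m (n j) i)) * (P k' i * Wd m (n k') i) := by
      rw [Finset.sum_congr rfl (fun i _ => hexp i), Finset.sum_comm]
      apply Finset.sum_congr rfl
      intro S _
      rw [Finset.sum_comm]
    rw [hswap]
    have key : ∀ S ∈ K.powerset, ∀ k' ∈ K,
        (∑ i ∈ Finset.range N, (∏ j ∈ S, (ε j i * Wd m (n j) i)) * (P k' i * Wd m (n k') i))
        = if S = {k'} then ∑ i ∈ Finset.range N, |P k' i| else 0 := by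
      intro S hS k' hk'
      have hSsub : S ⊆ K := Finset.mem_powerset.mp hS
      by_cases hcase : S = {k'}
      · rw [if_pos hcase, hcase]
        apply Finset.sum_congr rfl
        intro i _
        rw [Finset.prod_singleton]
        calc (ε k' i * Wd m (n k') i) * (P k' i * Wd m (n k') i)
            = (ε k' i * P k' i) * (Wd m (n k') i * Wd m (n k') i) := by ring
          _ = ε k' i * P k' i := by rw [Wd_sq]; ring
          _ = |P k' i| := by simp only [hε]; exact sign_mul_self' _
      · rw [if_neg hcase]
        -- construct T = symmetric difference of S and {k'}
        obtain ⟨T, hTsub, hTne, hxor⟩ :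
            ∃ T : Finset ℕ, T ⊆ K ∧ T.Nonempty ∧ xorFold n S ^^^ n k' = xorFold n T := by
          by_cases hmem : k' ∈ S
          · refine ⟨S.erase k', (S.erase_subset k').trans hSsub, ?_, ?_⟩
            · rcases Finset.eq_empty_or_nonempty (S.erase k') with he | hne
              · exfalso
                apply hcase
                apply Finset.Subset.antisymm
                · intro x hx
                  rcases eq_or_ne x k' with rfl | hxk
                  · exact Finset.mem_singleton_self _
                  · exact absurd (Finset.mem_erase.mpr ⟨hxk, hx⟩) (by simp [he])
                · exact Finset.singleton_subset_iff.mpr hmem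
              · exact hne
            · have hS' : S = insert k' (S.erase k') := (Finset.insert_erase hmem).symm
              conv_lhs => rw [hS', xorFold_insert n k' _ (Finset.notMem_erase k' S)]
              rw [Nat.xor_comm (n k') _, Nat.xor_xor_cancel_right]
          · refine ⟨insert k' S, ?_, Finset.insert_nonempty _ _, ?_⟩
            · intro x hx
              rcases Finset.mem_insert.mp hx with rfl | hxS
              · exact hk'
              · exact hSsub hxS
            · rw [xorFold_insert n k' S hmem, Nat.xor_comm]
        have hterm : ∀ i, (∏ j ∈ S, (ε j i * Wd m (n j) i)) * (P k' i * Wd m (n k') i)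
            = ((∏ j ∈ S, ε j i) * P k' i) * Wd m (xorFold n T) i := by
          intro i
          rw [Finset.prod_mul_distrib, prod_Wd]
          calc (∏ j ∈ S, ε j i) * Wd m (xorFold n S) i * (P k' i * Wd m (n k') i)
              = ((∏ j ∈ S, ε j i) * P k' i) * (Wd m (xorFold n S) i * Wd m (n k') i) := by ring
            _ = ((∏ j ∈ S, ε j i) * P k' i) * Wd m (xorFold n S ^^^ n k') i := by rw [Wd_mul]
            _ = ((∏ j ∈ S, ε j i) * P k' i) * Wd m (xorFold n T) i := by rw [hxor]
        rw [Finset.sum_congr rfl (fun i _ => hterm i), hN]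
        apply ortho n hn l m T hTne (hK ▸ hTsub)
        intro s hs i
        rw [hPflip k' s hs i]
        congr 1
        apply Finset.prod_congr rfl
        intro j _
        exact hεflip j s hs i
    rw [Finset.sum_congr rfl (fun S hS => Finset.sum_congr rfl (fun k' hk' => key S hS k' hk'))]
    rw [Finset.sum_comm]
    apply Finset.sum_congr rfl
    intro k' hk'
    rw [Finset.sum_ite_eq' K.powerset ({k'} : Finset ℕ) (fun _ => ∑ i ∈ Finset.range N, |P k' i|)]
    rw [if_pos (Finset.mem_powerset.mpr (Finset.singleton_subset_iff.mpr hk'))]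
  -- essential supremum bound
  set M0 : ℝ := ∑ i ∈ Finset.range N, |F i| with hM0
  have hfae : ∀ᵐ x ∂(volume.restrict (Set.Icc (0:ℝ) 1)),
      |(∑ k ∈ K, p k x * walsh (n k) x)| ≤ M0 := by
    filter_upwards [ae_exists_Ioo m] with x hx
    obtain ⟨i, hiN, h1, h2⟩ := hx
    rw [hfstep i x h1 h2]
    exact Finset.single_le_sum (f := fun i => |F i|) (fun j _ => abs_nonneg _)
      (Finset.mem_range.mpr (hN ▸ hiN))
  have hFM : ∀ i, i < N → |F i| ≤
      essSupNorm01 (fun x => ∑ k ∈ K, p k x * walsh (n k) x) := by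
    intro i hi
    unfold essSupNorm01
    apply le_essSup_of_Ioo _ M0 ((i:ℝ)/2^m) (((i:ℝ)+1)/2^m) (F i)
    · rw [div_lt_div_iff₀ h2m h2m]; nlinarith
    · intro x hx
      constructor
      · have : (0:ℝ) ≤ (i:ℝ)/2^m := by positivity
        linarith [hx.1]
      · have hiN' : (i:ℝ) + 1 ≤ 2^m := by
          have : i + 1 ≤ 2^m := by rw [hN] at hi; omega
          exact_mod_cast this
        have : ((i:ℝ)+1)/2^m ≤ 1 := by rw [div_le_one h2m]; linarith
        linarith [hx.2]
    · intro x hx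
      exact hfstep i x hx.1 hx.2
    · exact hfae
  -- final chain
  have hNR : ((2:ℝ))^m * ((2:ℝ)^m)⁻¹ = 1 := by field_simp
  calc ∑ k ∈ K, l1Norm01 (p k)
      = ∑ k ∈ K, (∑ i ∈ Finset.range N, |P k i|) * ((2:ℝ)^m)⁻¹ :=
        Finset.sum_congr rfl (fun k hk => hl1 k hk)
    _ = (∑ k ∈ K, ∑ i ∈ Finset.range N, |P k i|) * ((2:ℝ)^m)⁻¹ := by rw [Finset.sum_mul]
    _ = (∑ i ∈ Finset.range N, G i * F i) * ((2:ℝ)^m)⁻¹ := by rw [hGF]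
    _ ≤ ((2:ℝ)^m * essSupNorm01 (fun x => ∑ k ∈ K, p k x * walsh (n k) x)) * ((2:ℝ)^m)⁻¹ := by
        apply mul_le_mul_of_nonneg_right _ (by positivity)
        calc ∑ i ∈ Finset.range N, G i * F i
            ≤ ∑ i ∈ Finset.range N, G i *
                essSupNorm01 (fun x => ∑ k ∈ K, p k x * walsh (n k) x) := by
              apply Finset.sum_le_sum
              intro i hi
              apply mul_le_mul_of_nonneg_left _ (hG0 i)
              exact le_trans (le_abs_self _) (hFM i (Finset.mem_range.mp hi))
          _ = (∑ i ∈ Finset.range N, G i) *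
                essSupNorm01 (fun x => ∑ k ∈ K, p k x * walsh (n k) x) := by
              rw [Finset.sum_mul]
          _ = (2:ℝ)^m * essSupNorm01 (fun x => ∑ k ∈ K, p k x * walsh (n k) x) := by
              rw [hGsum]
    _ = essSupNorm01 (fun x => ∑ k ∈ K, p k x * walsh (n k) x) := by
        rw [mul_comm ((2:ℝ)^m) _, mul_assoc, hNR, mul_one]
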